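/- Let d, k ≥ 1 be integers, u^1, ..., u^k ∈ ℤ^d, and α_1, ..., α_k ≥ 0 real numbers. If α_1 + ... + α_k ≥ d, then there exist real numbers β_i ∈ [0, α_i] for i = 1, ..., k, not all zero, such that β_1 u^1 + ... + β_k u^k ∈ ℤ^d. -/

import Mathlib

open Finset Filter


open Finset

section Olson

variable (p : ℕ) [hp : Fact p.Prime] (d : ℕ)

local notation "R" => AddMonoidAlgebra (ZMod p) (Fin d → ZMod p)

noncomputable def xel (g : Fin d → ZMod p) : R := AddMonoidAlgebra.single g 1

lemma xel_mul (a b : Fin d → ZMod p) : xel p d a * xel p d b = xel p d (a + b) := by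
  simp [xel, AddMonoidAlgebra.single_mul_single]

lemma xel_zero : xel p d 0 = 1 := by
  simp [xel, AddMonoidAlgebra.one_def]

lemma one_sub_xel_pow (g : Fin d → ZMod p) : (1 - xel p d g) ^ p = 0 := by
  haveI : CharP R p := charP_of_injective_algebraMap' (ZMod p) p
  have hg : p • g = 0 := by
    funext i
    simp [Pi.smul_apply, nsmul_eq_mul, ZMod.natCast_self]
  rw [sub_pow_char, one_pow, xel, AddMonoidAlgebra.single_pow, hg, one_pow,
    ← AddMonoidAlgebra.one_def, sub_self]

noncomputable def yel (j : Fin d) : R := 1 - xel p d (Pi.single j 1)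

/-- membership in the span of the `yel`s -/
lemma one_sub_xel_mem (g : Fin d → ZMod p) :
    1 - xel p d g ∈ Submodule.span R (Set.range (yel p d)) := by
  set M := Submodule.span R (Set.range (yel p d)) with hM
  have hadd : ∀ a b : Fin d → ZMod p, 1 - xel p d a ∈ M → 1 - xel p d b ∈ M →
      1 - xel p d (a + b) ∈ M := by
    intro a b ha hb
    have key : 1 - xel p d (a + b) = (1 - xel p d a) + xel p d a * (1 - xel p d b) := by
      rw [mul_sub, mul_one, xel_mul]; ring
    rw [key]
    exact M.add_mem ha (M.smul_mem (xel p d a) hb)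
  have hzero : 1 - xel p d 0 ∈ M := by
    rw [xel_zero, sub_self]; exact M.zero_mem
  have hnsmul : ∀ (a : Fin d → ZMod p), 1 - xel p d a ∈ M →
      ∀ n : ℕ, 1 - xel p d (n • a) ∈ M := by
    intro a ha n
    induction n with
    | zero => simpa using hzero
    | succ m ih =>
      have : (m + 1) • a = m • a + a := by rw [add_nsmul, one_nsmul]
      rw [this]
      exact hadd _ _ ih ha
  have hsingle : ∀ (j : Fin d) (c : ZMod p), 1 - xel p d (Pi.single j c) ∈ M := by
    intro j c
    have hc : (Pi.single j c : Fin d → ZMod p) = c.val • (Pi.single j 1 : Fin d → ZMod p) := by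
      funext i
      by_cases h : i = j
      · subst h
        simp [ZMod.natCast_val, ZMod.cast_id]
      · simp [Pi.single_eq_of_ne h]
    have hy : 1 - xel p d (Pi.single j 1) ∈ M :=
      Submodule.subset_span ⟨j, rfl⟩
    rw [hc]
    exact hnsmul _ hy _
  have hsum : ∀ s : Finset (Fin d), 1 - xel p d (∑ j ∈ s, Pi.single j (g j)) ∈ M := by
    intro s
    induction s using Finset.induction with
    | empty => simpa using hzero
    | insert _ _ hx ih =>
      rw [Finset.sum_insert hx]
      exact hadd _ _ (hsingle _ _) ih
  have := hsum Finset.univ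
  rwa [Finset.univ_sum_single] at this

lemma prod_eq_zero_of_mem {ι : Type*} [Fintype ι]
    (hcard : d * (p - 1) + 1 ≤ Fintype.card ι) (v : ι → R)
    (hv : ∀ i, v i ∈ Submodule.span R (Set.range (yel p d))) :
    ∏ i, v i = 0 := by
  classical
  have hrep : ∀ i, ∃ c : Fin d → R, ∑ j, c j • yel p d j = v i := by
    intro i
    exact (Submodule.mem_span_range_iff_exists_fun R).mp (hv i)
  choose c hc using hrep
  have expand : ∏ i, v i = ∑ f ∈ Fintype.piFinset (fun _ : ι => (univ : Finset (Fin d))),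
      ∏ i, c i (f i) • yel p d (f i) := by
    have e1 : ∏ i, v i = ∏ i, ∑ j ∈ (univ : Finset (Fin d)), c i j • yel p d j :=
      Finset.prod_congr rfl fun i _ => (hc i).symm
    rw [e1, Finset.prod_univ_sum]
  rw [expand]
  apply Finset.sum_eq_zero
  intro f _
  -- pigeonhole: some fiber has at least p elements
  have hfib : ∃ j : Fin d, p ≤ (univ.filter (fun i => f i = j)).card := by
    by_contra hcon
    push_neg at hcon
    have hle : ∀ j : Fin d, (univ.filter (fun i => f i = j)).card ≤ p - 1 := by
      intro j
      have := hcon j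
      omega
    have hcards : Fintype.card ι = ∑ j : Fin d, (univ.filter (fun i => f i = j)).card := by
      rw [← Finset.card_univ]
      exact Finset.card_eq_sum_card_fiberwise fun x _ => Finset.mem_univ _
    have : Fintype.card ι ≤ d * (p - 1) := by
      rw [hcards]
      calc ∑ j : Fin d, (univ.filter (fun i => f i = j)).card
          ≤ ∑ _j : Fin d, (p - 1) := Finset.sum_le_sum fun j _ => hle j
        _ = d * (p - 1) := by simp [Finset.sum_const, mul_comm]
    omega
  obtain ⟨j, hj⟩ := hfib
  have hyzero : ∏ i, yel p d (f i) = 0 := by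
    rw [← Finset.prod_filter_mul_prod_filter_not univ (fun i => f i = j)]
    have h1 : ∏ i ∈ univ.filter (fun i => f i = j), yel p d (f i)
        = yel p d j ^ (univ.filter (fun i => f i = j)).card := by
      rw [← Finset.prod_const]
      apply Finset.prod_congr rfl
      intro i hi
      rw [(Finset.mem_filter.mp hi).2]
    have h2 : yel p d j ^ (univ.filter (fun i => f i = j)).card = 0 := by
      obtain ⟨m, hm⟩ := Nat.exists_eq_add_of_le hj
      rw [hm, pow_add]
      have : yel p d j ^ p = 0 := one_sub_xel_pow p d _
      rw [yel] at this ⊢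
      rw [this, zero_mul]
    rw [h1, h2, zero_mul]
  calc ∏ i, c i (f i) • yel p d (f i) = (∏ i, c i (f i)) * ∏ i, yel p d (f i) := by
        rw [← Finset.prod_mul_distrib]
        apply Finset.prod_congr rfl
        intro i _
        rw [smul_eq_mul]
    _ = 0 := by rw [hyzero, mul_zero]

theorem olson_zero_sum {ι : Type*} [Fintype ι] [DecidableEq ι]
    (hcard : d * (p - 1) + 1 ≤ Fintype.card ι) (g : ι → Fin d → ZMod p) :
    ∃ S : Finset ι, S.Nonempty ∧ ∑ i ∈ S, g i = 0 := by
  classical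
  by_contra hcon
  push_neg at hcon
  have hprod : ∏ i, (1 - xel p d (g i)) = 0 :=
    prod_eq_zero_of_mem p d hcard _ (fun i => one_sub_xel_mem p d (g i))
  have hexp : ∏ i, (1 - xel p d (g i))
      = ∑ t ∈ (univ : Finset ι).powerset,
          AddMonoidAlgebra.single (∑ i ∈ t, g i) ((-1 : ZMod p) ^ t.card) := by
    have h1 : ∀ i : ι, 1 - xel p d (g i) = (fun i => -(xel p d (g i))) i + (fun _ : ι => (1:R)) i := by
      intro i
      show 1 - xel p d (g i) = -(xel p d (g i)) + 1
      ring
    calc ∏ i, (1 - xel p d (g i))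
        = ∏ i, ((fun i => -(xel p d (g i))) i + (fun _ : ι => (1:R)) i) :=
          Finset.prod_congr rfl fun i _ => h1 i
      _ = ∑ t ∈ (univ : Finset ι).powerset,
            (∏ i ∈ t, -(xel p d (g i))) * ∏ _i ∈ univ \ t, (1:R) :=
          Finset.prod_add _ _ _
      _ = ∑ t ∈ (univ : Finset ι).powerset,
            AddMonoidAlgebra.single (∑ i ∈ t, g i) ((-1 : ZMod p) ^ t.card) := by
          apply Finset.sum_congr rfl
          intro t _
          rw [Finset.prod_const_one, mul_one]
          have : ∀ i ∈ t, -(xel p d (g i)) = AddMonoidAlgebra.single (g i) (-1 : ZMod p) := by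
            intro i _
            rw [xel, ← AddMonoidAlgebra.single_neg]
          rw [Finset.prod_congr rfl this, AddMonoidAlgebra.prod_single, Finset.prod_const]
  rw [hexp] at hprod
  -- evaluate the Finsupp at 0
  have h2 := congrArg ((Finsupp.applyAddHom (0 : Fin d → ZMod p)).comp (AddMonoidAlgebra.coeffAddEquiv : R ≃+ ((Fin d → ZMod p) →₀ ZMod p)).toAddMonoidHom) hprod
  rw [map_sum] at h2
  have h3 : ∑ t ∈ (univ : Finset ι).powerset,
      (if (∑ i ∈ t, g i) = 0 then ((-1 : ZMod p) ^ t.card) else 0) = 0 := by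
    simpa [Finsupp.single_apply] using h2
  have hterm : ∀ t ∈ (univ : Finset ι).powerset, t ≠ (∅ : Finset ι) →
      (if (∑ i ∈ t, g i) = 0 then ((-1 : ZMod p) ^ t.card) else 0) = 0 := by
    intro t _ ht
    have hne : (∑ i ∈ t, g i) ≠ 0 := hcon t (Finset.nonempty_of_ne_empty ht)
    rw [if_neg hne]
  rw [Finset.sum_eq_single (∅ : Finset ι) hterm (by simp)] at h3
  simp at h3

end Olson

lemma approx_sol (d k : ℕ) (hd : 1 ≤ d)
    (u : Fin k → Fin d → ℤ) (α : Fin k → ℝ) (hα : ∀ i, 0 ≤ α i)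
    (hsum : (d : ℝ) ≤ ∑ i, α i) (ε : ℝ) (hε : 0 < ε) :
    ∃ β : Fin k → ℝ, (∀ i, 0 ≤ β i ∧ β i ≤ α i * (1 + ε)) ∧ (∃ i, β i ≠ 0) ∧
      ∀ j : Fin d, ∃ z : ℤ, ∑ i, β i * (u i j : ℝ) = (z : ℝ) := by
  classical
  obtain ⟨p, hpge, hpp⟩ := Nat.exists_infinite_primes (⌈(k + 1 : ℝ) / ε⌉₊ + 1)
  haveI : Fact p.Prime := ⟨hpp⟩
  have hp0 : 0 < p := hpp.pos
  have hp0R : (0 : ℝ) < p := by exact_mod_cast hp0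
  have hpε : (k + 1 : ℝ) ≤ p * ε := by
    have h1 : (k + 1 : ℝ) / ε ≤ ⌈(k + 1 : ℝ) / ε⌉₊ := Nat.le_ceil _
    have h2 : (⌈(k + 1 : ℝ) / ε⌉₊ : ℝ) ≤ p := by
      exact_mod_cast Nat.le_of_succ_le hpge
    rw [div_le_iff₀ hε] at h1
    nlinarith
  set b : Fin k → ℕ := fun i => ⌊(p : ℝ) * (α i * (1 + ε))⌋₊ with hbdef
  have hb_le : ∀ i, (b i : ℝ) ≤ (p : ℝ) * (α i * (1 + ε)) := by
    intro i
    apply Nat.floor_le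
    have := hα i
    positivity
  have hb_gt : ∀ i, (p : ℝ) * (α i * (1 + ε)) - 1 < b i := fun i => Nat.sub_one_lt_floor _
  have hd1 : (1 : ℝ) ≤ d := by exact_mod_cast hd
  have hcard : d * (p - 1) + 1 ≤ ∑ i, b i := by
    have h1 : ∑ i, ((p : ℝ) * (α i * (1 + ε)) - 1) ≤ ∑ i, (b i : ℝ) :=
      Finset.sum_le_sum fun i _ => (hb_gt i).le
    have h2 : ∑ i, ((p : ℝ) * (α i * (1 + ε)) - 1)
        = (p : ℝ) * (1 + ε) * (∑ i, α i) - k := by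
      rw [Finset.mul_sum, Finset.sum_sub_distrib]
      simp only [Finset.sum_const, Finset.card_univ, Fintype.card_fin, nsmul_eq_mul, mul_one]
      congr 1
      exact Finset.sum_congr rfl fun i _ => by ring
    have h3 : (p : ℝ) * (1 + ε) * (d : ℝ) ≤ (p : ℝ) * (1 + ε) * (∑ i, α i) := by
      apply mul_le_mul_of_nonneg_left hsum
      positivity
    have hcastgoal : ((d * (p - 1) + 1 : ℕ) : ℝ) ≤ ((∑ i, b i : ℕ) : ℝ) := by
      push_cast [Nat.cast_sub (Nat.one_le_iff_ne_zero.mpr hp0.ne')]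
      have hmul : (p : ℝ) * ε * 1 ≤ (p : ℝ) * ε * d := by
        apply mul_le_mul_of_nonneg_left hd1
        positivity
      nlinarith
    exact_mod_cast hcastgoal
  -- apply Olson's theorem
  have hcard' : d * (p - 1) + 1 ≤ Fintype.card ((i : Fin k) × Fin (b i)) := by
    rw [Fintype.card_sigma]
    simpa using hcard
  obtain ⟨S, hSne, hS0⟩ := olson_zero_sum p d hcard'
    (fun s j => ((u s.1 j : ℤ) : ZMod p))
  set t : Fin k → ℕ := fun i => (S.filter (fun s => s.1 = i)).card with htdef
  have hfiber : ∀ i, (univ.filter (fun s : (i' : Fin k) × Fin (b i') => s.1 = i)).card = b i := by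
    intro i
    rw [← Fintype.card_subtype]
    have e : {s : (i' : Fin k) × Fin (b i') // s.1 = i} ≃ Fin (b i) :=
      { toFun := fun s => Fin.cast (congrArg b s.2) s.1.2
        invFun := fun y => ⟨⟨i, y⟩, rfl⟩
        left_inv := by rintro ⟨⟨i', y⟩, rfl⟩; rfl
        right_inv := fun y => rfl }
    rw [Fintype.card_congr e, Fintype.card_fin]
  have ht_le : ∀ i, t i ≤ b i := by
    intro i
    rw [← hfiber i]
    exact Finset.card_le_card (Finset.filter_subset_filter _ (Finset.subset_univ S))
  have hcoord : ∀ j, ∑ i : Fin k, (t i : ZMod p) * ((u i j : ℤ) : ZMod p) = 0 := by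
    intro j
    have h1 := congrFun hS0 j
    rw [Finset.sum_apply] at h1
    have h2 : ∑ i : Fin k, ∑ s ∈ S.filter (fun s => s.1 = i), ((u s.1 j : ℤ) : ZMod p)
        = ∑ s ∈ S, ((u s.1 j : ℤ) : ZMod p) :=
      Finset.sum_fiberwise S (fun s => s.1) (fun s => ((u s.1 j : ℤ) : ZMod p))
    have h3 : ∀ i : Fin k, ∑ s ∈ S.filter (fun s => s.1 = i), ((u s.1 j : ℤ) : ZMod p)
        = (t i : ZMod p) * ((u i j : ℤ) : ZMod p) := by
      intro i
      have : ∀ s ∈ S.filter (fun s => s.1 = i), ((u s.1 j : ℤ) : ZMod p) = ((u i j : ℤ) : ZMod p) := by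
        intro s hs
        rw [(Finset.mem_filter.mp hs).2]
      rw [Finset.sum_congr rfl this, Finset.sum_const, nsmul_eq_mul]
    rw [← Finset.sum_congr rfl (fun i _ => h3 i), h2, h1]
    rfl
  have hdvd : ∀ j, (p : ℤ) ∣ ∑ i, (t i : ℤ) * u i j := by
    intro j
    rw [← ZMod.intCast_zmod_eq_zero_iff_dvd]
    push_cast
    exact hcoord j
  refine ⟨fun i => (t i : ℝ) / p, ?_, ?_, ?_⟩
  · intro i
    constructor
    · positivity
    · rw [div_le_iff₀ hp0R]
      calc (t i : ℝ) ≤ b i := by exact_mod_cast ht_le i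
        _ ≤ (p : ℝ) * (α i * (1 + ε)) := hb_le i
        _ = α i * (1 + ε) * p := by ring
  · obtain ⟨s, hs⟩ := hSne
    refine ⟨s.1, ?_⟩
    have : 0 < t s.1 := by
      apply Finset.card_pos.mpr
      exact ⟨s, Finset.mem_filter.mpr ⟨hs, rfl⟩⟩
    have : (0 : ℝ) < (t s.1 : ℝ) / p := by
      apply div_pos _ hp0R
      exact_mod_cast this
    exact this.ne'
  · intro j
    obtain ⟨m, hm⟩ := hdvd j
    refine ⟨m, ?_⟩
    have hsumR : ∑ i, (t i : ℝ) * (u i j : ℝ) = (p : ℝ) * m := by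
      have := congrArg (fun z : ℤ => (z : ℝ)) hm
      push_cast at this
      exact this
    calc ∑ i, (t i : ℝ) / p * (u i j : ℝ)
        = (∑ i, (t i : ℝ) * (u i j : ℝ)) / p := by
          rw [Finset.sum_div]
          exact Finset.sum_congr rfl fun i _ => by ring
      _ = ((p : ℝ) * m) / p := by rw [hsumR]
      _ = m := by field_simp

theorem olson_mip_feasibility (d k : ℕ) (hd : 1 ≤ d) (hk : 1 ≤ k)
    (u : Fin k → Fin d → ℤ) (α : Fin k → ℝ) (hα : ∀ i, 0 ≤ α i)
    (hsum : (d : ℝ) ≤ ∑ i, α i) :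
    ∃ β : Fin k → ℝ, (∀ i, β i ∈ Set.Icc 0 (α i)) ∧ (∃ i, β i ≠ 0) ∧
      ∀ j : Fin d, ∃ z : ℤ, ∑ i, β i * (u i j : ℝ) = (z : ℝ) := by
  classical
  have hap : ∀ n : ℕ, ∃ β : Fin k → ℝ,
      (∀ i, 0 ≤ β i ∧ β i ≤ α i * (1 + 1 / ((n : ℝ) + 1))) ∧ (∃ i, β i ≠ 0) ∧
      ∀ j : Fin d, ∃ z : ℤ, ∑ i, β i * (u i j : ℝ) = (z : ℝ) := by
    intro n
    exact approx_sol d k hd u α hα hsum (1 / ((n : ℝ) + 1)) (by positivity)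
  choose β hβ1 hβ2 hβ3 using hap
  have hmem : ∀ n, β n ∈ Set.Icc (0 : Fin k → ℝ) (fun i => α i * 2) := by
    intro n
    rw [Set.mem_Icc]
    constructor
    · intro i; exact (hβ1 n i).1
    · intro i
      have h2 := (hβ1 n i).2
      have h3 : α i * (1 + 1 / ((n : ℝ) + 1)) ≤ α i * 2 := by
        apply mul_le_mul_of_nonneg_left _ (hα i)
        have h4 : 1 / ((n : ℝ) + 1) ≤ 1 := by
          rw [div_le_one (by positivity)]
          linarith [Nat.cast_nonneg (α := ℝ) n]
        linarith
      exact h2.trans h3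
  have hcomp : IsCompact (Set.Icc (0 : Fin k → ℝ) (fun i => α i * 2)) := isCompact_Icc
  obtain ⟨a, ha, φ, hφ, htend⟩ := hcomp.tendsto_subseq hmem
  have hcoord : ∀ i, Tendsto (fun n => β (φ n) i) atTop (nhds (a i)) := by
    intro i
    exact tendsto_pi_nhds.mp htend i
  by_cases ha0 : a = 0
  · -- limit is zero: find an exact kernel solution and rescale
    have hzero : ∀ j : Fin d, Tendsto (fun n => ∑ i, β (φ n) i * (u i j : ℝ)) atTop (nhds 0) := by
      intro j
      have := tendsto_finset_sum (univ : Finset (Fin k))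
        (fun i _ => (hcoord i).mul_const ((u i j : ℝ)))
      simpa [ha0] using this
    have hev : ∀ᶠ n in atTop, ∀ j : Fin d,
        (∑ i, β (φ n) i * (u i j : ℝ)) ∈ Set.Ioo (-1 : ℝ) 1 := by
      rw [Filter.eventually_all]
      intro j
      exact (hzero j) (Ioo_mem_nhds (by norm_num) (by norm_num))
    obtain ⟨n, hn⟩ := hev.exists
    set γ := β (φ n) with hγdef
    have hγint : ∀ j : Fin d, ∑ i, γ i * (u i j : ℝ) = 0 := by
      intro j
      obtain ⟨z, hz⟩ := hβ3 (φ n) j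
      have h1 := hn j
      rw [hz] at h1
      have h2 : z = 0 := by
        rcases h1 with ⟨hl, hr⟩
        have hl' : (-1 : ℤ) < z := by exact_mod_cast hl
        have hr' : z < 1 := by exact_mod_cast hr
        omega
      rw [hz, h2, Int.cast_zero]
    obtain ⟨i0, hi0⟩ := hβ2 (φ n)
    have hγ0 : ∀ i, 0 ≤ γ i := fun i => (hβ1 (φ n) i).1
    have hi0' : 0 < γ i0 := lt_of_le_of_ne (hγ0 i0) (Ne.symm hi0)
    set P := univ.filter (fun i => 0 < γ i) with hPdef
    have hPne : P.Nonempty := ⟨i0, Finset.mem_filter.mpr ⟨Finset.mem_univ _, hi0'⟩⟩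
    have hαpos : ∀ i ∈ P, 0 < α i := by
      intro i hi
      have hγi := (Finset.mem_filter.mp hi).2
      have hub := (hβ1 (φ n) i).2
      by_contra hcon
      push_neg at hcon
      have : α i * (1 + 1 / ((φ n : ℝ) + 1)) ≤ 0 := by
        apply mul_nonpos_of_nonpos_of_nonneg hcon
        positivity
      linarith
    set c := P.inf' hPne (fun i => α i / γ i) with hcdef
    have hc0 : 0 < c := by
      rw [hcdef, Finset.lt_inf'_iff]
      intro i hi
      exact div_pos (hαpos i hi) ((Finset.mem_filter.mp hi).2)
    refine ⟨fun i => c * γ i, ?_, ⟨i0, ?_⟩, ?_⟩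
    · intro i
      rw [Set.mem_Icc]
      by_cases hiP : i ∈ P
      · constructor
        · exact mul_nonneg hc0.le (hγ0 i)
        · have h1 : c ≤ α i / γ i := Finset.inf'_le _ hiP
          have hγi := (Finset.mem_filter.mp hiP).2
          rw [le_div_iff₀ hγi] at h1
          exact h1
      · have : γ i = 0 := by
          by_contra hcon
          exact hiP (Finset.mem_filter.mpr ⟨Finset.mem_univ _,
            lt_of_le_of_ne (hγ0 i) (Ne.symm hcon)⟩)
        simp only []
        rw [this, mul_zero]
        exact ⟨le_refl 0, hα i⟩
    · exact (mul_pos hc0 hi0').ne'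
    · intro j
      refine ⟨0, ?_⟩
      rw [Int.cast_zero]
      calc ∑ i, c * γ i * (u i j : ℝ) = c * ∑ i, γ i * (u i j : ℝ) := by
            rw [Finset.mul_sum]
            exact Finset.sum_congr rfl fun i _ => by ring
        _ = 0 := by rw [hγint j, mul_zero]
  · -- limit is nonzero: it is itself a solution
    refine ⟨a, ?_, ?_, ?_⟩
    · intro i
      rw [Set.mem_Icc]
      constructor
      · exact ha.1 i
      · have hub : Tendsto (fun m => α i * (1 + 1 / ((φ m : ℝ) + 1))) atTop
            (nhds (α i * (1 + 0))) := by
          apply Tendsto.mul tendsto_const_nhds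
          apply Tendsto.add tendsto_const_nhds
          have h1 : Tendsto (fun m : ℕ => 1 / ((m : ℝ) + 1)) atTop (nhds 0) :=
            tendsto_one_div_add_atTop_nhds_zero_nat
          exact h1.comp hφ.tendsto_atTop
        have := le_of_tendsto_of_tendsto' (hcoord i) hub
          (fun m => (hβ1 (φ m) i).2)
        simpa using this
    · obtain ⟨i, hi⟩ := Function.ne_iff.mp ha0
      exact ⟨i, hi⟩
    · intro j
      have hs : Tendsto (fun m => ∑ i, β (φ m) i * (u i j : ℝ)) atTop
          (nhds (∑ i, a i * (u i j : ℝ))) :=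
        tendsto_finset_sum _ (fun i _ => (hcoord i).mul_const _)
      have hcl : IsClosed (Set.range ((↑) : ℤ → ℝ)) :=
        Int.isClosedEmbedding_coe_real.isClosed_range
      have hmem' : (∑ i, a i * (u i j : ℝ)) ∈ Set.range ((↑) : ℤ → ℝ) := by
        apply hcl.mem_of_tendsto hs
        filter_upwards with m
        obtain ⟨z, hz⟩ := hβ3 (φ m) j
        exact ⟨z, hz.symm⟩
      obtain ⟨z, hz⟩ := hmem'
      exact ⟨z, hz.symm⟩
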